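/- Consider the linear network with J resources {1,...,J} and routes {0,1,...,J}, where route 0 uses all resources and route i uses only resource i, capacities C_j = 1, and loads satisfying ρ_0 + ρ_j < 1 for all j. Then π(n_0,...,n_J) = [∏_{j=1}^J (1-ρ_0-ρ_j)/(1-ρ_0)^{J-1}] · C(n_0+...+n_J, n_0) · ∏_{i=0}^J ρ_i^{n_i} (where C(·,·) is the binomial coefficient) is a probability distribution on ℤ_+^{J+1}, i.e., Σ over all (n_0,...,n_J) ∈ ℤ_+^{J+1} of π equals 1. -/

import Mathlib

lemma geomPi {J : ℕ} (q : Fin J → ℝ) (h0 : ∀ j, 0 ≤ q j) (h1 : ∀ j, q j < 1) :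
    HasSum (fun m : Fin J → ℕ => ∏ j, q j ^ m j) (∏ j, (1 - q j)⁻¹) := by
  induction J with
  | zero =>
      have : HasSum (fun m : Fin 0 → ℕ => ∏ j, q j ^ m j)
          ((fun m : Fin 0 → ℕ => ∏ j, q j ^ m j) default) :=
        hasSum_single default fun b' hb' => absurd (Subsingleton.elim b' default) hb'
      simpa using this
  | succ n ih =>
      have hg : HasSum (fun k : ℕ => q 0 ^ k) (1 - q 0)⁻¹ := by
        simpa using hasSum_geometric_of_lt_one (h0 0) (h1 0)
      have hih : HasSum (fun m : Fin n → ℕ => ∏ j, q j.succ ^ m j)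
          (∏ j : Fin n, (1 - q j.succ)⁻¹) :=
        ih (fun j => q j.succ) (fun j => h0 j.succ) (fun j => h1 j.succ)
      have hf1 : 0 ≤ (fun k : ℕ => q 0 ^ k) := fun k => pow_nonneg (h0 0) k
      have hf2 : 0 ≤ (fun m : Fin n → ℕ => ∏ j, q j.succ ^ m j) :=
        fun m => Finset.prod_nonneg fun j _ => pow_nonneg (h0 j.succ) _
      have hsum : Summable (fun p : ℕ × (Fin n → ℕ) =>
          (q 0 ^ p.1) * ∏ j, q j.succ ^ p.2 j) :=
        Summable.mul_of_nonneg (f := fun k : ℕ => q 0 ^ k)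
          (g := fun m : Fin n → ℕ => ∏ j, q j.succ ^ m j)
          hg.summable hih.summable hf1 hf2
      have hprod : HasSum (fun p : ℕ × (Fin n → ℕ) =>
            (q 0 ^ p.1) * ∏ j, q j.succ ^ p.2 j)
          ((1 - q 0)⁻¹ * ∏ j : Fin n, (1 - q j.succ)⁻¹) :=
        HasSum.mul (f := fun k : ℕ => q 0 ^ k)
          (g := fun m : Fin n → ℕ => ∏ j, q j.succ ^ m j) hg hih hsum
      have key : HasSum (fun p : ℕ × (Fin n → ℕ) =>
          (fun m : Fin (n+1) → ℕ => ∏ j, q j ^ m j) (Fin.consEquiv _ p))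
          ((1 - q 0)⁻¹ * ∏ j : Fin n, (1 - q j.succ)⁻¹) := by
        refine hprod.congr_fun fun p => ?_
        simp only [Fin.consEquiv, Equiv.coe_fn_mk, Fin.prod_univ_succ, Fin.cons_zero,
          Fin.cons_succ]
      rw [Fin.prod_univ_succ]
      exact ((Fin.consEquiv (fun _ : Fin (n + 1) => ℕ)).hasSum_iff).1 key

/-- For the linear network (route `0` through all `J` resources, route `i` through
resource `i` only, unit capacities, `ρ_0 + ρ_j < 1`), the Massoulié–Roberts formula
`π(n) = [∏_j (1-ρ_0-ρ_j)/(1-ρ_0)^{J-1}] C(Σ n_i, n_0) ∏ ρ_i^{n_i}` defines a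
probability distribution on `ℤ_+^{J+1}`. -/
theorem stmt11 {J : ℕ} (hJ : 1 ≤ J)
    (ρ : Fin (J + 1) → ℝ) (hρpos : ∀ i, 0 < ρ i)
    (hρ : ∀ j : Fin J, ρ 0 + ρ j.succ < 1)
    (π : (Fin (J + 1) → ℕ) → ℝ)
    (hπ : ∀ n, π n = (∏ j : Fin J, (1 - ρ 0 - ρ j.succ)) / (1 - ρ 0) ^ (J - 1)
        * (Nat.choose (∑ i, n i) (n 0) : ℝ) * ∏ i, ρ i ^ n i) :
    ∑' n : Fin (J + 1) → ℕ, π n = 1 := by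
  -- basic positivity facts
  set C : ℝ := (∏ j : Fin J, (1 - ρ 0 - ρ j.succ)) / (1 - ρ 0) ^ (J - 1) with hC
  have hr0 : 0 < ρ 0 := hρpos 0
  have hDpos : ∀ j : Fin J, 0 < 1 - ρ 0 - ρ j.succ := fun j => by
    have := hρ j; linarith
  have hr01 : ρ 0 < 1 := by
    have := hρ ⟨0, hJ⟩
    have := hρpos (Fin.succ ⟨0, hJ⟩)
    linarith
  have h1r0 : 0 < 1 - ρ 0 := by linarith
  have hCpos : 0 < C := by
    apply div_pos (Finset.prod_pos fun j _ => hDpos j) (pow_pos h1r0 _)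
  set q : Fin J → ℝ := fun j => ρ j.succ / (1 - ρ 0) with hqdef
  have hq0 : ∀ j, 0 ≤ q j := fun j => le_of_lt (div_pos (hρpos j.succ) h1r0)
  have hq1 : ∀ j, q j < 1 := fun j => by
    rw [div_lt_one h1r0]
    have := hρ j; linarith
  have hnorm : ‖ρ 0‖ < 1 := by
    rw [Real.norm_eq_abs, abs_of_pos hr0]; exact hr01
  -- transport to the product type
  set e : (Fin J → ℕ) × ℕ ≃ (Fin (J + 1) → ℕ) :=
    (Equiv.prodComm _ _).trans (Fin.consEquiv fun _ => ℕ) with he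
  have hfe : ∀ p : (Fin J → ℕ) × ℕ, π (e p) =
      C * (((p.2 + ∑ j, p.1 j).choose p.2 : ℕ) : ℝ)
        * (ρ 0 ^ p.2 * ∏ j : Fin J, ρ j.succ ^ p.1 j) := by
    intro p
    have he2 : e p = Fin.cons p.2 p.1 := by
      simp [he, Fin.consEquiv, Equiv.prodComm]
    rw [hπ, he2]
    rw [Fin.sum_univ_succ, Fin.prod_univ_succ]
    simp [Fin.cons_zero, Fin.cons_succ]
  -- inner sums (over the route-0 coordinate)
  have hinner : ∀ m : Fin J → ℕ, HasSum (fun k : ℕ => π (e (m, k)))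
      ((C * ∏ j : Fin J, ρ j.succ ^ m j) * (1 / (1 - ρ 0) ^ ((∑ j, m j) + 1))) := by
    intro m
    have h := (hasSum_choose_mul_geometric_of_norm_lt_one (𝕜 := ℝ) (∑ j, m j)
        hnorm).mul_left (C * ∏ j : Fin J, ρ j.succ ^ m j)
    refine h.congr_fun fun k => ?_
    rw [hfe (m, k)]
    have : (k + ∑ j, m j).choose k = (k + ∑ j, m j).choose (∑ j, m j) :=
      Nat.choose_symm_add
    simp only [this]
    ring
  -- the outer sum values
  set g : (Fin J → ℕ) → ℝ := fun m => (C / (1 - ρ 0)) * ∏ j : Fin J, q j ^ m j with hgdef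
  have hgval : ∀ m : Fin J → ℕ,
      (C * ∏ j : Fin J, ρ j.succ ^ m j) * (1 / (1 - ρ 0) ^ ((∑ j, m j) + 1)) = g m := by
    intro m
    have hpow : ∏ j : Fin J, q j ^ m j =
        (∏ j : Fin J, ρ j.succ ^ m j) / (1 - ρ 0) ^ (∑ j, m j) := by
      rw [← Finset.prod_pow_eq_pow_sum, ← Finset.prod_div_distrib]
      exact Finset.prod_congr rfl fun j _ => div_pow _ _ _
    show _ = C / (1 - ρ 0) * ∏ j : Fin J, q j ^ m j
    rw [hpow, pow_succ]
    field_simp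
  have houter : HasSum g ((C / (1 - ρ 0)) * ∏ j : Fin J, (1 - q j)⁻¹) :=
    (geomPi q hq0 hq1).mul_left _
  -- the total is 1
  have htotal : (C / (1 - ρ 0)) * ∏ j : Fin J, (1 - q j)⁻¹ = 1 := by
    have h1 : ∀ j : Fin J, (1 - q j)⁻¹ = (1 - ρ 0) / (1 - ρ 0 - ρ j.succ) := by
      intro j
      rw [hqdef]
      rw [show (1 : ℝ) - ρ j.succ / (1 - ρ 0) = (1 - ρ 0 - ρ j.succ) / (1 - ρ 0) by
        field_simp]
      rw [inv_div]
    rw [Finset.prod_congr rfl fun j _ => h1 j, Finset.prod_div_distrib,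
      Finset.prod_const, Finset.card_univ, Fintype.card_fin, hC]
    have hDne : (∏ j : Fin J, (1 - ρ 0 - ρ j.succ)) ≠ 0 :=
      ne_of_gt (Finset.prod_pos fun j _ => hDpos j)
    have h1ne : (1 - ρ 0) ≠ 0 := ne_of_gt h1r0
    have hJpow : (1 - ρ 0) ^ (J - 1) * (1 - ρ 0) = (1 - ρ 0) ^ J := by
      rw [← pow_succ]
      congr 1
      omega
    rw [← hJpow]
    field_simp
  -- nonnegativity and summability on the product
  have hnn : 0 ≤ (fun p : (Fin J → ℕ) × ℕ => π (e p)) := by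
    intro p
    show (0:ℝ) ≤ π (e p)
    rw [hfe p]
    have : 0 ≤ ∏ j : Fin J, ρ j.succ ^ p.1 j :=
      Finset.prod_nonneg fun j _ => pow_nonneg (hρpos j.succ).le _
    positivity
  have hslice : ∀ m, Summable (fun k : ℕ => π (e (m, k))) := fun m => (hinner m).summable
  have hsumf : Summable (fun p : (Fin J → ℕ) × ℕ => π (e p)) := by
    rw [summable_prod_of_nonneg hnn]
    refine ⟨hslice, ?_⟩
    have : (fun m => ∑' k, π (e (m, k))) = g := by
      funext m
      rw [(hinner m).tsum_eq, hgval m]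
    rw [this]
    exact houter.summable
  -- put it all together
  rw [← e.tsum_eq π]
  rw [Summable.tsum_prod' hsumf hslice]
  have : (fun m => ∑' k, π (e (m, k))) = g := by
    funext m
    rw [(hinner m).tsum_eq, hgval m]
  rw [this, houter.tsum_eq, htotal]
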